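/- (Monotonicity in the location parameter of the truncated Gaussian CDF, underlying the post-selection confidence interval construction.) Let σ > 0, a < b and fix x with a < x < b. Then the map μ ↦ F^{[a,b]}_{μ,σ²}(x) = (Φ((x−μ)/σ) − Φ((a−μ)/σ)) / (Φ((b−μ)/σ) − Φ((a−μ)/σ)) is strictly decreasing in μ on ℝ. Consequently, for each p ∈ (0,1) the equation F^{[a,b]}_{μ,σ²}(x) = p has at most one solution μ, so the confidence limits L and R defined by F^{[a,b]}_{L,σ²}(x) = 1 − p/2 and F^{[a,b]}_{R,σ²}(x) = p/2 are uniquely determined when they exist. -/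

import Mathlib

open MeasureTheory

/-- Standard Gaussian density `φ(x) = (2π)^{-1/2} exp(-x²/2)`. -/
noncomputable def gpdf (x : ℝ) : ℝ := (Real.sqrt (2 * Real.pi))⁻¹ * Real.exp (-x ^ 2 / 2)

/-- Standard Gaussian CDF `Φ(x)`. -/
noncomputable def gcdf (x : ℝ) : ℝ := ∫ t in Set.Iic x, gpdf t

/-- The CDF, evaluated at `x`, of a `N(μ,σ²)` random variable truncated to `[a,b]`. -/
noncomputable def truncGaussCDF (μ σ a b x : ℝ) : ℝ :=
  (gcdf ((x - μ) / σ) - gcdf ((a - μ) / σ)) / (gcdf ((b - μ) / σ) - gcdf ((a - μ) / σ))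

lemma gpdf_pos (t : ℝ) : 0 < gpdf t := by
  unfold gpdf
  positivity

lemma gpdf_continuous : Continuous gpdf := by
  unfold gpdf
  fun_prop

lemma gpdf_integrable : Integrable gpdf := by
  have h : Integrable fun t : ℝ => Real.exp (-(1/2 : ℝ) * t ^ 2) :=
    integrable_exp_neg_mul_sq (by norm_num)
  have he : gpdf
      = fun t => (Real.sqrt (2 * Real.pi))⁻¹ * Real.exp (-(1/2 : ℝ) * t ^ 2) := by
    funext t; unfold gpdf; ring_nf
  rw [he]
  exact h.const_mul _

lemma gcdf_sub (l u : ℝ) : gcdf u - gcdf l = ∫ t in l..u, gpdf t := by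
  unfold gcdf
  exact intervalIntegral.integral_Iic_sub_Iic gpdf_integrable.integrableOn
    gpdf_integrable.integrableOn

lemma gpdf_mlr {s t c₁ c₂ : ℝ} (hst : s < t) (hc : c₂ < c₁) :
    gpdf (s + c₂) * gpdf (t + c₁) < gpdf (s + c₁) * gpdf (t + c₂) := by
  unfold gpdf
  have h2 : (0:ℝ) < (Real.sqrt (2 * Real.pi))⁻¹ := by positivity
  have key : Real.exp (-(s+c₂)^2/2) * Real.exp (-(t+c₁)^2/2)
      < Real.exp (-(s+c₁)^2/2) * Real.exp (-(t+c₂)^2/2) := by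
    rw [← Real.exp_add, ← Real.exp_add]
    apply Real.exp_lt_exp.2
    nlinarith [mul_pos (sub_pos.2 hst) (sub_pos.2 hc)]
  nlinarith [mul_lt_mul_of_pos_left key (mul_pos h2 h2)]

lemma gpdf_shift_cont (c : ℝ) : Continuous fun s : ℝ => gpdf (s + c) :=
  gpdf_continuous.comp (continuous_id.add continuous_const)

lemma shift_int_pos {A X : ℝ} (c : ℝ) (h : A < X) : 0 < ∫ s in A..X, gpdf (s + c) :=
  intervalIntegral.intervalIntegral_pos_of_pos_on
    ((gpdf_shift_cont c).intervalIntegrable _ _) (fun t _ => gpdf_pos _) h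

lemma mlr_integral {A X B c₁ c₂ : ℝ} (hAX : A < X) (hXB : X < B) (hc : c₂ < c₁) :
    (∫ s in A..X, gpdf (s + c₂)) * (∫ t in X..B, gpdf (t + c₁))
      < (∫ s in A..X, gpdf (s + c₁)) * (∫ t in X..B, gpdf (t + c₂)) := by
  set T₁ := ∫ t in X..B, gpdf (t + c₁) with hT₁
  set T₂ := ∫ t in X..B, gpdf (t + c₂) with hT₂
  have inner : ∀ s : ℝ, s ≤ X → 0 < gpdf (s + c₁) * T₂ - gpdf (s + c₂) * T₁ := by
    intro s hs
    have heq : gpdf (s + c₁) * T₂ - gpdf (s + c₂) * T₁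
        = ∫ t in X..B, (gpdf (s + c₁) * gpdf (t + c₂) - gpdf (s + c₂) * gpdf (t + c₁)) := by
      rw [intervalIntegral.integral_sub (f := fun t => gpdf (s + c₁) * gpdf (t + c₂))
          (g := fun t => gpdf (s + c₂) * gpdf (t + c₁))
          ((continuous_const.mul (gpdf_shift_cont c₂)).intervalIntegrable _ _)
          ((continuous_const.mul (gpdf_shift_cont c₁)).intervalIntegrable _ _),
        intervalIntegral.integral_const_mul, intervalIntegral.integral_const_mul]
    rw [heq]
    refine intervalIntegral.intervalIntegral_pos_of_pos_on
      (((continuous_const.mul (gpdf_shift_cont c₂)).sub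
        (continuous_const.mul (gpdf_shift_cont c₁))).intervalIntegrable _ _) ?_ hXB
    intro t ht
    have : s < t := lt_of_le_of_lt hs ht.1
    linarith [gpdf_mlr this hc]
  have houter : 0 < ∫ s in A..X, (gpdf (s + c₁) * T₂ - gpdf (s + c₂) * T₁) := by
    refine intervalIntegral.intervalIntegral_pos_of_pos_on
      ((((gpdf_shift_cont c₁).mul continuous_const).sub
        ((gpdf_shift_cont c₂).mul continuous_const)).intervalIntegrable _ _) ?_ hAX
    intro s hs
    exact inner s hs.2.le
  have heq2 : (∫ s in A..X, (gpdf (s + c₁) * T₂ - gpdf (s + c₂) * T₁))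
      = (∫ s in A..X, gpdf (s + c₁)) * T₂ - (∫ s in A..X, gpdf (s + c₂)) * T₁ := by
    rw [intervalIntegral.integral_sub (f := fun s => gpdf (s + c₁) * T₂)
        (g := fun s => gpdf (s + c₂) * T₁)
        (((gpdf_shift_cont c₁).mul continuous_const).intervalIntegrable _ _)
        (((gpdf_shift_cont c₂).mul continuous_const).intervalIntegrable _ _),
      intervalIntegral.integral_mul_const, intervalIntegral.integral_mul_const]
  rw [heq2] at houter
  linarith

/-- Monotonicity in the location parameter of the truncated Gaussian CDF: for fixed
`σ > 0`, `a < x < b`, the map `μ ↦ F^{[a,b]}_{μ,σ²}(x)` is strictly decreasing on `ℝ`;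
consequently, for each `p ∈ (0,1)` the equation `F^{[a,b]}_{μ,σ²}(x) = p` has at most one
solution `μ`, so the post-selection confidence limits are uniquely determined when they
exist. -/
theorem truncGaussCDF_strictAnti_in_location
    (σ a b x : ℝ) (hσ : 0 < σ) (hab : a < b) (hax : a < x) (hxb : x < b) :
    StrictAnti (fun μ : ℝ => truncGaussCDF μ σ a b x) ∧
    ∀ p ∈ Set.Ioo (0 : ℝ) 1, ∀ μ₁ μ₂ : ℝ,
      truncGaussCDF μ₁ σ a b x = p → truncGaussCDF μ₂ σ a b x = p → μ₁ = μ₂ := by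
  have hrepr : ∀ μ : ℝ, truncGaussCDF μ σ a b x
      = (∫ s in (a/σ)..(x/σ), gpdf (s + (-μ/σ)))
        / ((∫ s in (a/σ)..(x/σ), gpdf (s + (-μ/σ))) + (∫ t in (x/σ)..(b/σ), gpdf (t + (-μ/σ)))) := by
    intro μ
    have h1 : ∀ y : ℝ, (y - μ) / σ = y / σ + (-μ/σ) := by intro y; field_simp; ring
    have h2 : ∀ u v : ℝ, gcdf (u / σ + (-μ/σ)) - gcdf (v / σ + (-μ/σ))
        = ∫ s in (v/σ)..(u/σ), gpdf (s + (-μ/σ)) := by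
      intro u v
      rw [gcdf_sub, intervalIntegral.integral_comp_add_right]
    have h3 : (∫ s in (a/σ)..(x/σ), gpdf (s + (-μ/σ))) + (∫ t in (x/σ)..(b/σ), gpdf (t + (-μ/σ)))
        = ∫ s in (a/σ)..(b/σ), gpdf (s + (-μ/σ)) :=
      intervalIntegral.integral_add_adjacent_intervals
        ((gpdf_shift_cont _).intervalIntegrable _ _) ((gpdf_shift_cont _).intervalIntegrable _ _)
    rw [truncGaussCDF, h1 x, h1 a, h1 b, h2 x a, h2 b a, h3]
  have hAX : a/σ < x/σ := by gcongr
  have hXB : x/σ < b/σ := by gcongr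
  have hanti : StrictAnti (fun μ : ℝ => truncGaussCDF μ σ a b x) := by
    intro μ₁ μ₂ hμ
    simp only
    rw [hrepr μ₁, hrepr μ₂]
    have hc : -μ₂/σ < -μ₁/σ := by gcongr
    set c₁ := -μ₁/σ
    set c₂ := -μ₂/σ
    have hN₁ := shift_int_pos c₁ hAX
    have hN₂ := shift_int_pos c₂ hAX
    have hT₁ := shift_int_pos (A := x/σ) (X := b/σ) c₁ hXB
    have hT₂ := shift_int_pos (A := x/σ) (X := b/σ) c₂ hXB
    have hkey := mlr_integral hAX hXB hc
    rw [div_lt_div_iff₀ (by linarith) (by linarith)]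
    nlinarith
  exact ⟨hanti, fun p _ μ₁ μ₂ h1 h2 => hanti.injective (h1.trans h2.symm)⟩
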